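/- Let \mu > 0, C > 0 and q > -\mu - 1/2 be such that |J_{\mu-1/2}(x)| \le C x^q for all x > 0, and suppose \mu + q + 1/2 > 0. Then for every p \ge 0 and r > 0, the p-extended Mathieu series satisfies |S_{\mu,p}(r)| \le \frac{C\sqrt{\pi}}{(2r)^{\mu-1/2}\Gamma(\mu+1)} \Gamma(\mu+q+3/2)\, \zeta(\mu+q+3/2). -/

import Mathlib

open MeasureTheory Real

/-- Bessel function of the first kind. -/
noncomputable def besselJ (ν x : ℝ) : ℝ :=
  ∑' n : ℕ, ((-1) ^ n / (n.factorial * Real.Gamma (n + ν + 1))) * (x / 2) ^ (2 * n + ν : ℝ)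

/-- Riemann zeta function for real argument. -/
noncomputable def rzeta (a : ℝ) : ℝ := ∑' n : ℕ, 1 / ((n : ℝ) + 1) ^ a

/-- The p-extended Mathieu series via its integral representation. -/
noncomputable def SmuP (μ p r : ℝ) : ℝ :=
  Real.sqrt π / ((2 * r) ^ (μ - 1 / 2) * Real.Gamma (μ + 1)) *
    ∫ x in Set.Ioi (0 : ℝ),
      x ^ (μ + 1 / 2) * Real.exp (-p / x) / (Real.exp x - 1) * besselJ (μ - 1 / 2) (r * x)

lemma aux_integrable {s b : ℝ} (hs : -1 < s) (hb : 0 < b) :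
    IntegrableOn (fun x : ℝ => x ^ s * Real.exp (-(b * x))) (Set.Ioi 0) := by
  have := integrableOn_rpow_mul_exp_neg_mul_rpow (p := 1) hs one_pos hb
  refine this.congr_fun (fun x hx => ?_) measurableSet_Ioi
  simp only [Real.rpow_one, neg_mul]

lemma aux_tsum_exp {x : ℝ} (hx : 0 < x) :
    ∑' n : ℕ, Real.exp (-(((n : ℝ) + 1) * x)) = 1 / (Real.exp x - 1) := by
  have h1 : Real.exp (-x) < 1 := Real.exp_lt_one_iff.mpr (by linarith)
  have h0 : (0:ℝ) ≤ Real.exp (-x) := (Real.exp_pos _).le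
  have key : ∀ n : ℕ, Real.exp (-(((n : ℝ) + 1) * x)) = Real.exp (-x) * Real.exp (-x) ^ n := by
    intro n
    rw [← Real.exp_nat_mul, ← Real.exp_add]
    ring_nf
  simp_rw [key]
  rw [tsum_mul_left, tsum_geometric_of_lt_one h0 h1]
  have he : Real.exp x ≠ 0 := (Real.exp_pos _).ne'
  have he1 : Real.exp x - 1 ≠ 0 := by
    have : 1 < Real.exp x := by
      have := Real.add_one_le_exp x; linarith
    linarith
  rw [Real.exp_neg]
  rw [eq_div_iff he1]
  field_simp

lemma aux_summable {s : ℝ} (hs : 1 < s) :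
    Summable (fun n : ℕ => (1 / ((n : ℝ) + 1)) ^ s) := by
  have h := Real.summable_one_div_nat_rpow.mpr hs
  have h2 := (summable_nat_add_iff 1).mpr h
  refine h2.congr (fun n => ?_)
  push_cast
  rw [one_div, one_div, Real.inv_rpow (by positivity)]

lemma aux_key_integral {s : ℝ} (hs : 1 < s) :
    ∫ x in Set.Ioi (0:ℝ), x ^ (s - 1) / (Real.exp x - 1) = Real.Gamma s * rzeta s := by
  have hs0 : (0:ℝ) < s := by linarith
  set F : ℕ → ℝ → ℝ := fun n x => x ^ (s - 1) * Real.exp (-(((n : ℝ) + 1) * x)) with hF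
  have hb : ∀ n : ℕ, (0:ℝ) < (n : ℝ) + 1 := fun n => by positivity
  have hF_int : ∀ n, Integrable (F n) (volume.restrict (Set.Ioi 0)) := fun n =>
    aux_integrable (by linarith) (hb n)
  have hF_val : ∀ n, ∫ x in Set.Ioi (0:ℝ), F n x = (1 / ((n:ℝ)+1)) ^ s * Real.Gamma s :=
    fun n => Real.integral_rpow_mul_exp_neg_mul_Ioi hs0 (hb n)
  have hF_norm : ∀ n, (∫ x in Set.Ioi (0:ℝ), ‖F n x‖) = ∫ x in Set.Ioi (0:ℝ), F n x := by
    intro n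
    refine setIntegral_congr_fun measurableSet_Ioi (fun x hx => ?_)
    rw [Real.norm_eq_abs, abs_of_nonneg]
    have : (0:ℝ) < x := hx
    positivity
  have hsum : Summable (fun n => ∫ x in Set.Ioi (0:ℝ), ‖F n x‖) := by
    simp_rw [hF_norm, hF_val]
    exact (aux_summable hs).mul_right _
  have := MeasureTheory.integral_tsum_of_summable_integral_norm hF_int hsum
  have heq : ∫ x in Set.Ioi (0:ℝ), (∑' n, F n x) =
      ∫ x in Set.Ioi (0:ℝ), x ^ (s - 1) / (Real.exp x - 1) := by
    refine setIntegral_congr_fun measurableSet_Ioi (fun x hx => ?_)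
    have hx : (0:ℝ) < x := hx
    simp only [hF]
    rw [tsum_mul_left, aux_tsum_exp hx]
    ring
  rw [heq] at this
  rw [← this]
  simp_rw [hF_val]
  rw [tsum_mul_right, rzeta]
  have : ∀ n : ℕ, (1 / ((n:ℝ)+1)) ^ s = 1 / ((n:ℝ)+1) ^ s := fun n => by
    rw [one_div, one_div, Real.inv_rpow (by positivity)]
  simp_rw [this]
  ring

lemma aux_integrableOn_div {s : ℝ} (hs : 1 < s) :
    IntegrableOn (fun x : ℝ => x ^ (s - 1) / (Real.exp x - 1)) (Set.Ioi 0) := by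
  have hint : IntegrableOn
      (fun x : ℝ => (x ^ (s - 2) + x ^ (s - 1)) * Real.exp (-(1 * x))) (Set.Ioi 0) := by
    have h1 := aux_integrable (s := s - 2) (b := 1) (by linarith) one_pos
    have h2 := aux_integrable (s := s - 1) (b := 1) (by linarith) one_pos
    refine MeasureTheory.IntegrableOn.congr_fun (h1.add h2) (fun x hx => ?_) measurableSet_Ioi
    simp only [Pi.add_apply]
    ring
  refine hint.mono' ?_ ?_
  · apply Measurable.aestronglyMeasurable
    measurability
  · rw [ae_restrict_iff' measurableSet_Ioi]
    filter_upwards with x hx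
    have hx : (0:ℝ) < x := hx
    have he1 : 0 < Real.exp x - 1 := by
      have := Real.add_one_le_exp x; nlinarith [Real.exp_pos x]
    rw [Real.norm_eq_abs, abs_of_nonneg (by positivity)]
    have hbound : 1 / (Real.exp x - 1) ≤ (1 / x + 1) * Real.exp (-x) := by
      have hex : (0:ℝ) < Real.exp x := Real.exp_pos x
      rw [Real.exp_neg, div_le_iff₀ he1]
      have heq : (1 / x + 1) * (Real.exp x)⁻¹ * (Real.exp x - 1) =
          ((1 + x) * (Real.exp x - 1)) / (x * Real.exp x) := by
        field_simp
      rw [heq, le_div_iff₀ (by positivity)]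
      nlinarith [Real.add_one_le_exp x]
    calc x ^ (s - 1) / (Real.exp x - 1) = x ^ (s - 1) * (1 / (Real.exp x - 1)) := by ring
      _ ≤ x ^ (s - 1) * ((1 / x + 1) * Real.exp (-x)) := by
          apply mul_le_mul_of_nonneg_left hbound (by positivity)
      _ = (x ^ (s - 2) + x ^ (s - 1)) * Real.exp (-(1 * x)) := by
          rw [one_mul]
          have hxx : x ^ (s - 1) * (1 / x) = x ^ (s - 2) := by
            rw [one_div, ← Real.rpow_neg_one x, ← Real.rpow_add hx]
            congr 1
            ring
          linear_combination Real.exp (-x) * hxx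


theorem p_extended_mathieu_generic_bound (μ C q p r : ℝ) (hμ : 0 < μ) (hC : 0 < C)
    (hq : -μ - 1 / 2 < q) (hr : 0 < r)
    (hJ : ∀ x : ℝ, 0 < x → |besselJ (μ - 1 / 2) (r * x)| ≤ C * x ^ q)
    (hqμ : 0 < μ + q + 1 / 2) (hp : 0 ≤ p) :
    |SmuP μ p r| ≤
      C * Real.sqrt π / ((2 * r) ^ (μ - 1 / 2) * Real.Gamma (μ + 1)) *
        (Real.Gamma (μ + q + 3 / 2) * rzeta (μ + q + 3 / 2)) := by
  set s : ℝ := μ + q + 3 / 2 with hsdef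
  have hs1 : 1 < s := by rw [hsdef]; linarith
  have hπ : 0 < Real.sqrt π := Real.sqrt_pos.mpr Real.pi_pos
  have hD : 0 < (2 * r) ^ (μ - 1 / 2) * Real.Gamma (μ + 1) := by positivity
  have hzeta : 0 ≤ rzeta s := tsum_nonneg (fun n => by positivity)
  -- integrable majorant
  have hg_int : Integrable (fun x : ℝ => C * (x ^ (s - 1) / (Real.exp x - 1)))
      (volume.restrict (Set.Ioi 0)) := (aux_integrableOn_div hs1).const_mul C
  have hbd : ∀ᵐ x ∂(volume.restrict (Set.Ioi (0:ℝ))),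
      ‖x ^ (μ + 1 / 2) * Real.exp (-p / x) / (Real.exp x - 1) * besselJ (μ - 1 / 2) (r * x)‖
        ≤ C * (x ^ (s - 1) / (Real.exp x - 1)) := by
    rw [ae_restrict_iff' measurableSet_Ioi]
    filter_upwards with x hx
    have hx : (0:ℝ) < x := hx
    have he1 : 0 < Real.exp x - 1 := by
      have := Real.add_one_le_exp x; nlinarith
    have hexp1 : Real.exp (-p / x) ≤ 1 := by
      rw [Real.exp_le_one_iff]
      have : 0 ≤ p / x := by positivity
      rw [neg_div]
      linarith
    have hA : 0 ≤ x ^ (μ + 1 / 2) * Real.exp (-p / x) / (Real.exp x - 1) := by positivity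
    rw [Real.norm_eq_abs, abs_mul, abs_of_nonneg hA]
    calc x ^ (μ + 1 / 2) * Real.exp (-p / x) / (Real.exp x - 1) * |besselJ (μ - 1/2) (r * x)|
        ≤ x ^ (μ + 1 / 2) * 1 / (Real.exp x - 1) * (C * x ^ q) := by
          have h1 : x ^ (μ + 1 / 2) * Real.exp (-p / x) / (Real.exp x - 1) ≤
              x ^ (μ + 1 / 2) * 1 / (Real.exp x - 1) := by
            gcongr
          exact mul_le_mul h1 (hJ x hx) (abs_nonneg _) (by positivity)
      _ = C * (x ^ (s - 1) / (Real.exp x - 1)) := by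
          have : x ^ (μ + 1 / 2) * x ^ q = x ^ (s - 1) := by
            rw [← Real.rpow_add hx]
            congr 1
            rw [hsdef]; ring
          rw [mul_one, ← this]
          ring
  have hkey : ‖∫ x in Set.Ioi (0:ℝ),
      x ^ (μ + 1 / 2) * Real.exp (-p / x) / (Real.exp x - 1) * besselJ (μ - 1 / 2) (r * x)‖
        ≤ C * (Real.Gamma s * rzeta s) := by
    refine (MeasureTheory.norm_integral_le_of_norm_le hg_int hbd).trans ?_
    rw [MeasureTheory.integral_const_mul, aux_key_integral hs1]
  rw [SmuP, abs_mul, abs_of_nonneg (by positivity : (0:ℝ) ≤ Real.sqrt π / ((2*r) ^ (μ - 1/2) * Real.Gamma (μ+1)))]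
  rw [← Real.norm_eq_abs]
  calc Real.sqrt π / ((2*r) ^ (μ - 1/2) * Real.Gamma (μ+1)) *
        ‖∫ x in Set.Ioi (0:ℝ), x ^ (μ + 1 / 2) * Real.exp (-p / x) / (Real.exp x - 1) * besselJ (μ - 1 / 2) (r * x)‖
      ≤ Real.sqrt π / ((2*r) ^ (μ - 1/2) * Real.Gamma (μ+1)) * (C * (Real.Gamma s * rzeta s)) := by
        exact mul_le_mul_of_nonneg_left hkey (by positivity)
    _ = C * Real.sqrt π / ((2*r) ^ (μ - 1/2) * Real.Gamma (μ+1)) * (Real.Gamma s * rzeta s) := by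
        ring
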